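/- Let G be a group with finite generating set S such that the Cayley graph Γ(G,S) has only finitely many (graph) cone types up to weak equivalence. Then the geodesic growth series L(z) = Σ_{n≥0} l(n) zⁿ is a rational function: there exist polynomials P and Q with integer coefficients, Q ≠ 0, such that Q(z)·L(z) = P(z) as formal power series. -/

import Mathlib

variable {G : Type*} [Group G]

noncomputable def wordLength (S : Set G) (g : G) : ℕ :=
  sInf {n | ∃ w : List G, (∀ x ∈ w, x ∈ S ∪ S⁻¹) ∧ w.length = n ∧ w.prod = g}

def cayley (S : Set G) : SimpleGraph G where
  Adj g h := g ≠ h ∧ h * g⁻¹ ∈ S ∪ S⁻¹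
  symm := by
    constructor
    rintro g h ⟨hne, hmem⟩
    refine ⟨hne.symm, ?_⟩
    have key : g * h⁻¹ = (h * g⁻¹)⁻¹ := by group
    rw [key]
    rcases hmem with h1 | h1
    · exact Or.inr (by simpa [Set.mem_inv] using h1)
    · exact Or.inl (by simpa [Set.mem_inv] using h1)
  loopless := ⟨fun g h => h.1 rfl⟩

def coneSet (S : Set G) (g : G) : Set G :=
  {h | wordLength S h = wordLength S g + (cayley S).dist g h}

lemma self_mem_coneSet (S : Set G) (g : G) : g ∈ coneSet S g := by
  simp [coneSet]

/-- The cone `C(g)` as a subgraph of the Cayley graph. -/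
def coneSubgraph (S : Set G) (g : G) : (cayley S).Subgraph where
  verts := coneSet S g
  Adj a b := a ∈ coneSet S g ∧ b ∈ coneSet S g ∧ (cayley S).Adj a b
  adj_sub h := h.2.2
  edge_vert h := h.1
  symm := ⟨by rintro a b ⟨ha, hb, hab⟩; exact ⟨hb, ha, hab.symm⟩⟩

/-- The extended cone `C̄(g)` as a subgraph of the Cayley graph: the cone together with,
for each vertex `h` of the cone and each tangent edge `{h,k}` of the Cayley graph,
the vertex `k` and the edge `{h,k}`. -/
def extConeSubgraph (S : Set G) (g : G) : (cayley S).Subgraph where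
  verts := coneSet S g ∪
    {k | ∃ h ∈ coneSet S g, (cayley S).Adj h k ∧ wordLength S h = wordLength S k}
  Adj a b := (cayley S).Adj a b ∧
    ((a ∈ coneSet S g ∧ b ∈ coneSet S g) ∨
      (wordLength S a = wordLength S b ∧ (a ∈ coneSet S g ∨ b ∈ coneSet S g)))
  adj_sub h := h.1
  edge_vert := by
    rintro a b ⟨hadj, hc | ⟨ht, hc⟩⟩
    · exact Or.inl hc.1
    · rcases hc with hc | hc
      · exact Or.inl hc
      · exact Or.inr ⟨b, hc, hadj.symm, ht.symm⟩
  symm := by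
    constructor
    rintro a b ⟨hadj, hc | ⟨ht, hc⟩⟩
    · exact ⟨hadj.symm, Or.inl ⟨hc.2, hc.1⟩⟩
    · exact ⟨hadj.symm, Or.inr ⟨ht.symm, hc.symm⟩⟩

lemma self_mem_extCone (S : Set G) (g : G) : g ∈ (extConeSubgraph S g).verts :=
  Set.mem_union_left _ (self_mem_coneSet S g)

/-- Strong equivalence of extended cones: a graph isomorphism of the extended cones sending
root to root and cone onto cone. -/
noncomputable def StrongEquiv (S : Set G) (g h : G) : Prop :=
  ∃ T : (extConeSubgraph S g).coe ≃g (extConeSubgraph S h).coe,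
    ((T ⟨g, self_mem_extCone S g⟩ : (extConeSubgraph S h).verts) : G) = h ∧
    ∀ x : (extConeSubgraph S g).verts,
      ((x : G) ∈ coneSet S g ↔ ((T x : (extConeSubgraph S h).verts) : G) ∈ coneSet S h)

/-- Weak equivalence of cones: a root-preserving graph isomorphism of the cones. -/
noncomputable def WeakEquiv (S : Set G) (g h : G) : Prop :=
  ∃ T : (cayley S).induce (coneSet S g) ≃g (cayley S).induce (coneSet S h),
    ((T ⟨g, self_mem_coneSet S g⟩ : coneSet S h) : G) = h

/-- `m(C̄(g))`: the number of norm decreasing edges at `g`. -/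
noncomputable def mval (S : Set G) (g : G) : ℕ :=
  Set.ncard {h | (cayley S).Adj g h ∧ wordLength S g = wordLength S h + 1}

/-- `n(C̄(g),C̄(h))`: the number of norm increasing edges `(g,h')` at `g` with
`C̄(h')` strongly equivalent to `C̄(h)`. -/
noncomputable def nval (S : Set G) (g h : G) : ℕ :=
  Set.ncard {h' | (cayley S).Adj g h' ∧ wordLength S h' = wordLength S g + 1 ∧
    StrongEquiv S h' h}

/-- The geodesic growth function `l(n)`: the number of geodesic words of length `n`
over the alphabet `S ∪ S⁻¹`. -/
noncomputable def geodesicGrowth (S : Set G) (n : ℕ) : ℕ :=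
  Set.ncard {w : List G | (∀ x ∈ w, x ∈ S ∪ S⁻¹) ∧ w.length = n ∧
    wordLength S w.prod = n}


section Aux
variable {S : Set G}

lemma inv_mem_alpha {a : G} (ha : a ∈ S ∪ S⁻¹) : a⁻¹ ∈ S ∪ S⁻¹ := by
  rcases ha with h | h
  · exact Or.inr (by simpa [Set.mem_inv] using h)
  · exact Or.inl (by simpa [Set.mem_inv] using h)

lemma exists_word (hgen : Subgroup.closure S = ⊤) (g : G) :
    ∃ w : List G, (∀ x ∈ w, x ∈ S ∪ S⁻¹) ∧ w.prod = g := by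
  have hg : g ∈ Subgroup.closure S := hgen ▸ Subgroup.mem_top g
  induction hg using Subgroup.closure_induction with
  | mem x hx => exact ⟨[x], by simp [hx], by simp⟩
  | one => exact ⟨[], by simp, by simp⟩
  | mul x y hx hy ihx ihy =>
    obtain ⟨wx, hwx, hpx⟩ := ihx
    obtain ⟨wy, hwy, hpy⟩ := ihy
    exact ⟨wx ++ wy, by
      intro z hz; rcases List.mem_append.mp hz with h | h
      exacts [hwx z h, hwy z h], by simp [hpx, hpy]⟩
  | inv x hx ih =>
    obtain ⟨w, hw, hp⟩ := ih
    refine ⟨(w.map fun x => x⁻¹).reverse, ?_, ?_⟩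
    · intro z hz
      simp only [List.mem_reverse, List.mem_map] at hz
      obtain ⟨a, ha, rfl⟩ := hz
      exact inv_mem_alpha (hw a ha)
    · rw [← List.prod_inv_reverse, hp]

lemma wordLength_exists (hgen : Subgroup.closure S = ⊤) (g : G) :
    ∃ w : List G, (∀ x ∈ w, x ∈ S ∪ S⁻¹) ∧ w.length = wordLength S g ∧ w.prod = g := by
  obtain ⟨w, hw, hp⟩ := exists_word hgen g
  have : wordLength S g ∈ {n | ∃ w : List G, (∀ x ∈ w, x ∈ S ∪ S⁻¹) ∧ w.length = n ∧ w.prod = g} :=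
    Nat.sInf_mem ⟨w.length, w, hw, rfl, hp⟩
  exact this

lemma wordLength_le {g : G} (w : List G) (hw : ∀ x ∈ w, x ∈ S ∪ S⁻¹) (hp : w.prod = g) :
    wordLength S g ≤ w.length :=
  Nat.sInf_le ⟨w, hw, rfl, hp⟩

lemma wordLength_one : wordLength S (1 : G) = 0 :=
  Nat.le_zero.mp (wordLength_le [] (by simp) (by simp))

lemma wordLength_mul_le (hgen : Subgroup.closure S = ⊤) {a : G} (ha : a ∈ S ∪ S⁻¹) (g : G) :
    wordLength S (a * g) ≤ wordLength S g + 1 := by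
  obtain ⟨w, hw, hl, hp⟩ := wordLength_exists hgen g
  refine le_trans (wordLength_le (a :: w) ?_ (by simp [hp])) (by simp [hl])
  intro x hx
  rcases List.mem_cons.mp hx with rfl | h
  exacts [ha, hw x h]

lemma adj_word (h : (cayley S).Adj g k) : k = (k * g⁻¹) * g := by group

lemma wordLength_le_of_adj (hgen : Subgroup.closure S = ⊤) {g k : G} (h : (cayley S).Adj g k) :
    wordLength S k ≤ wordLength S g + 1 := by
  have := wordLength_mul_le hgen (show g ≠ k ∧ k * g⁻¹ ∈ S ∪ S⁻¹ from h).2 g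
  rwa [← adj_word h] at this

lemma wordLength_le_walk (hgen : Subgroup.closure S = ⊤) {g k : G} (p : (cayley S).Walk g k) :
    wordLength S k ≤ wordLength S g + p.length := by
  induction p with
  | nil => simp
  | cons hadj p ih =>
    calc wordLength S _ ≤ wordLength S _ + p.length := ih
    _ ≤ (wordLength S _ + 1) + p.length := by
        exact Nat.add_le_add_right (wordLength_le_of_adj hgen hadj) _
    _ = wordLength S _ + (p.length + 1) := by ring
    _ = _ := by simp [SimpleGraph.Walk.length_cons]

lemma dist_le_word (w : List G) (hw : ∀ x ∈ w, x ∈ S ∪ S⁻¹) (g : G) :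
    (cayley S).Reachable g (w.prod * g) ∧ (cayley S).dist g (w.prod * g) ≤ w.length := by
  induction w with
  | nil => exact ⟨by simp only [List.prod_nil, one_mul]; exact SimpleGraph.Reachable.refl g, by simp⟩
  | cons a w ih =>
    obtain ⟨hr, hd⟩ := ih (fun x hx => hw x (List.mem_cons_of_mem a hx))
    have hprod : (a :: w).prod * g = a * (w.prod * g) := by
      simp [mul_assoc]
    by_cases hcase : a * (w.prod * g) = w.prod * g
    · rw [hprod, hcase]
      exact ⟨hr, hd.trans (by simp)⟩
    · have hadj : (cayley S).Adj (w.prod * g) (a * (w.prod * g)) := by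
        show w.prod * g ≠ a * (w.prod * g) ∧ a * (w.prod * g) * (w.prod * g)⁻¹ ∈ S ∪ S⁻¹
        refine ⟨Ne.symm hcase, ?_⟩
        have : a * (w.prod * g) * (w.prod * g)⁻¹ = a := by group
        rw [this]
        exact hw a List.mem_cons_self
      rw [hprod]
      constructor
      · exact hr.trans hadj.reachable
      · obtain ⟨p, hp⟩ := hr.exists_walk_length_eq_dist
        have := (cayley S).dist_le (p.concat hadj)
        rw [SimpleGraph.Walk.length_concat, hp] at this
        exact this.trans (by simpa using Nat.add_le_add_right hd 1)

lemma cayley_connected (hgen : Subgroup.closure S = ⊤) : (cayley S).Connected := by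
  rw [SimpleGraph.connected_iff]
  refine ⟨fun u v => ?_, ⟨1⟩⟩
  obtain ⟨w, hw, hp⟩ := exists_word hgen (v * u⁻¹)
  have := (dist_le_word w hw u).1
  rwa [hp, inv_mul_cancel_right] at this

lemma wordLength_le_dist (hgen : Subgroup.closure S = ⊤) (g k : G) :
    wordLength S k ≤ wordLength S g + (cayley S).dist g k := by
  obtain ⟨p, hp⟩ := (cayley_connected hgen).exists_walk_length_eq_dist g k
  have := wordLength_le_walk hgen p
  rwa [hp] at this

end Aux

section Cone
variable {S : Set G}

lemma mem_coneSet_iff {g x : G} :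
    x ∈ coneSet S g ↔ wordLength S x = wordLength S g + (cayley S).dist g x := Iff.rfl

lemma adj_mem_coneSet_iff {g x : G} (h : (cayley S).Adj g x) :
    x ∈ coneSet S g ↔ wordLength S x = wordLength S g + 1 := by
  rw [mem_coneSet_iff, SimpleGraph.dist_eq_one_iff_adj.mpr h]

lemma geodesic_mem_cone (hgen : Subgroup.closure S = ⊤) {g x : G}
    (hx : x ∈ coneSet S g) (p : (cayley S).Walk g x) (hlen : p.length = (cayley S).dist g x)
    {y : G} (hy : y ∈ p.support) :
    y ∈ coneSet S g ∧ (cayley S).dist g y + (cayley S).dist y x = (cayley S).dist g x := by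
  classical
  have hconn := cayley_connected hgen
  have h1 : (cayley S).dist g y ≤ (p.takeUntil y hy).length := (cayley S).dist_le _
  have h2 : (cayley S).dist y x ≤ (p.dropUntil y hy).length := (cayley S).dist_le _
  have h3 : (p.takeUntil y hy).length + (p.dropUntil y hy).length = p.length := by
    rw [← SimpleGraph.Walk.length_append, p.take_spec hy]
  have h4 : (cayley S).dist g x ≤ (cayley S).dist g y + (cayley S).dist y x :=
    hconn.dist_triangle
  have hdist : (cayley S).dist g y + (cayley S).dist y x = (cayley S).dist g x := by omega
  have h5 : wordLength S x ≤ wordLength S y + (cayley S).dist y x := wordLength_le_dist hgen y x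
  have h6 : wordLength S y ≤ wordLength S g + (cayley S).dist g y := wordLength_le_dist hgen g y
  have hxc : wordLength S x = wordLength S g + (cayley S).dist g x := hx
  exact ⟨by rw [mem_coneSet_iff]; omega, hdist⟩

lemma cone_mono (hgen : Subgroup.closure S = ⊤) {g g' : G} (hg' : g' ∈ coneSet S g) :
    coneSet S g' ⊆ coneSet S g := by
  intro x hx
  have hconn := cayley_connected hgen
  have h4 : (cayley S).dist g x ≤ (cayley S).dist g g' + (cayley S).dist g' x :=
    hconn.dist_triangle
  have h5 : wordLength S x ≤ wordLength S g + (cayley S).dist g x := wordLength_le_dist hgen g x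
  have hxc : wordLength S x = wordLength S g' + (cayley S).dist g' x := hx
  have hgc : wordLength S g' = wordLength S g + (cayley S).dist g g' := hg'
  rw [mem_coneSet_iff]; omega

/-- Lift a walk whose support lies in `s` to the induced subgraph. -/
lemma walk_induce {V : Type*} {Γ : SimpleGraph V} {s : Set V} :
    ∀ {u v : V} (p : Γ.Walk u v), (∀ x ∈ p.support, x ∈ s) → ∀ (hu : u ∈ s) (hv : v ∈ s),
    ∃ q : (Γ.induce s).Walk ⟨u, hu⟩ ⟨v, hv⟩, q.length = p.length := by
  intro u v p
  induction p with
  | nil => exact fun _ _ _ => ⟨SimpleGraph.Walk.nil, rfl⟩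
  | @cons a b c h p ih =>
    intro hs ha hc
    have hb : b ∈ s := hs b (by simp)
    obtain ⟨q, hq⟩ := ih (fun x hx => hs x (by simp [hx])) hb hc
    exact ⟨SimpleGraph.Walk.cons (by exact h) q, by exact congrArg (· + 1) hq⟩

/-- The projection hom from an induced subgraph. -/
def induceVal {V : Type*} (Γ : SimpleGraph V) (s : Set V) : Γ.induce s →g Γ where
  toFun := Subtype.val
  map_rel' := fun h => h

lemma induce_dist_eq {V : Type*} {Γ : SimpleGraph V} {s : Set V} {a x : V} (ha : a ∈ s)
    (hx : x ∈ s) (p : Γ.Walk a x) (hlen : p.length = Γ.dist a x)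
    (hsupp : ∀ y ∈ p.support, y ∈ s) :
    (Γ.induce s).Reachable ⟨a, ha⟩ ⟨x, hx⟩ ∧ (Γ.induce s).dist ⟨a, ha⟩ ⟨x, hx⟩ = Γ.dist a x := by
  obtain ⟨q, hq⟩ := walk_induce p hsupp ha hx
  have hreach : (Γ.induce s).Reachable ⟨a, ha⟩ ⟨x, hx⟩ := ⟨q⟩
  refine ⟨hreach, le_antisymm (le_trans ((Γ.induce s).dist_le q) (by rw [hq, hlen])) ?_⟩
  obtain ⟨r, hr⟩ := hreach.exists_walk_length_eq_dist
  have := Γ.dist_le (r.map (induceVal Γ s))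
  rwa [SimpleGraph.Walk.length_map, hr] at this

lemma induce_dist_ge {V : Type*} {Γ : SimpleGraph V} {s : Set V} {a x : V} (ha : a ∈ s)
    (hx : x ∈ s) (hreach : (Γ.induce s).Reachable ⟨a, ha⟩ ⟨x, hx⟩) :
    Γ.dist a x ≤ (Γ.induce s).dist ⟨a, ha⟩ ⟨x, hx⟩ := by
  obtain ⟨r, hr⟩ := hreach.exists_walk_length_eq_dist
  have := Γ.dist_le (r.map (induceVal Γ s))
  rwa [SimpleGraph.Walk.length_map, hr] at this

lemma cone_dist_eq (hgen : Subgroup.closure S = ⊤) {g g' x : G} (hg' : g' ∈ coneSet S g)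
    (hx' : x ∈ coneSet S g') (hx : x ∈ coneSet S g) :
    ((cayley S).induce (coneSet S g)).Reachable ⟨g', hg'⟩ ⟨x, hx⟩ ∧
    ((cayley S).induce (coneSet S g)).dist ⟨g', hg'⟩ ⟨x, hx⟩ = (cayley S).dist g' x := by
  obtain ⟨p, hp⟩ := (cayley_connected hgen).exists_walk_length_eq_dist g' x
  exact induce_dist_eq hg' hx p hp
    (fun y hy => cone_mono hgen hg' (geodesic_mem_cone hgen hx' p hp hy).1)

lemma mem_cone_iff_intrinsic (hgen : Subgroup.closure S = ⊤) {g g' x : G}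
    (hg' : g' ∈ coneSet S g) (hx : x ∈ coneSet S g) :
    x ∈ coneSet S g' ↔
      (((cayley S).induce (coneSet S g)).Reachable ⟨g', hg'⟩ ⟨x, hx⟩ ∧
      ((cayley S).induce (coneSet S g)).dist ⟨g, self_mem_coneSet S g⟩ ⟨x, hx⟩ =
        ((cayley S).induce (coneSet S g)).dist ⟨g, self_mem_coneSet S g⟩ ⟨g', hg'⟩ +
        ((cayley S).induce (coneSet S g)).dist ⟨g', hg'⟩ ⟨x, hx⟩) := by
  have hdx := cone_dist_eq hgen (self_mem_coneSet S g) hx hx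
  have hdg' := cone_dist_eq hgen (self_mem_coneSet S g) hg' hg'
  constructor
  · intro hxg'
    have hd := cone_dist_eq hgen hg' hxg' hx
    refine ⟨hd.1, ?_⟩
    rw [hdx.2, hdg'.2, hd.2]
    have h1 : wordLength S x = wordLength S g' + (cayley S).dist g' x := hxg'
    have h2 : wordLength S g' = wordLength S g + (cayley S).dist g g' := hg'
    have h3 : wordLength S x = wordLength S g + (cayley S).dist g x := hx
    omega
  · rintro ⟨hreach, heq⟩
    have hle : (cayley S).dist g' x ≤ ((cayley S).induce (coneSet S g)).dist ⟨g', hg'⟩ ⟨x, hx⟩ :=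
      induce_dist_ge hg' hx hreach
    rw [hdx.2, hdg'.2] at heq
    have h2 : wordLength S g' = wordLength S g + (cayley S).dist g g' := hg'
    have h3 : wordLength S x = wordLength S g + (cayley S).dist g x := hx
    have h5 : wordLength S x ≤ wordLength S g' + (cayley S).dist g' x := wordLength_le_dist hgen g' x
    rw [mem_coneSet_iff]; omega

end Cone

section IsoInv
variable {V W : Type*} {A : SimpleGraph V} {B : SimpleGraph W}

lemma iso_reachable (f : A ≃g B) {u v : V} :
    A.Reachable u v ↔ B.Reachable (f u) (f v) := by
  constructor
  · rintro ⟨p⟩; exact ⟨p.map f.toHom⟩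
  · rintro ⟨p⟩
    have : A.Reachable (f.symm (f u)) (f.symm (f v)) := ⟨p.map f.symm.toHom⟩
    simpa using this

lemma iso_dist_le (f : A ≃g B) (u v : V) : B.dist (f u) (f v) ≤ A.dist u v := by
  by_cases h : A.Reachable u v
  · obtain ⟨p, hp⟩ := h.exists_walk_length_eq_dist
    have := B.dist_le (p.map f.toHom)
    rwa [SimpleGraph.Walk.length_map, hp] at this
  · have hb : ¬ B.Reachable (f u) (f v) := fun hb => h ((iso_reachable f).mpr hb)
    rw [SimpleGraph.dist_eq_zero_of_not_reachable hb]
    exact Nat.zero_le _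

lemma iso_dist (f : A ≃g B) (u v : V) : B.dist (f u) (f v) = A.dist u v := by
  refine le_antisymm (iso_dist_le f u v) ?_
  have := iso_dist_le f.symm (f u) (f v)
  simpa using this

end IsoInv

section WE
variable {S : Set G}

lemma weakEquiv_refl (g : G) : WeakEquiv S g g :=
  ⟨RelIso.refl _, rfl⟩

lemma weakEquiv_symm {g h : G} : WeakEquiv S g h → WeakEquiv S h g := by
  rintro ⟨T, hT⟩
  refine ⟨T.symm, ?_⟩
  have : T ⟨g, self_mem_coneSet S g⟩ = ⟨h, self_mem_coneSet S h⟩ := Subtype.ext hT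
  rw [← this, RelIso.symm_apply_apply]

lemma weakEquiv_trans {g h k : G} : WeakEquiv S g h → WeakEquiv S h k → WeakEquiv S g k := by
  rintro ⟨T, hT⟩ ⟨U, hU⟩
  refine ⟨T.trans U, ?_⟩
  have : T ⟨g, self_mem_coneSet S g⟩ = ⟨h, self_mem_coneSet S h⟩ := Subtype.ext hT
  show ((U (T ⟨g, _⟩) : coneSet S k) : G) = k
  rw [this]
  exact hU

/-- Key lemma: a weak equivalence of cones sends sub-cones to sub-cones. -/
lemma cone_image_mem_iff (hgen : Subgroup.closure S = ⊤) {g h : G}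
    (T : (cayley S).induce (coneSet S g) ≃g (cayley S).induce (coneSet S h))
    (hT : ((T ⟨g, self_mem_coneSet S g⟩ : coneSet S h) : G) = h)
    {g' x : G} (hg' : g' ∈ coneSet S g) (hx : x ∈ coneSet S g) :
    x ∈ coneSet S g' ↔
      ((T ⟨x, hx⟩ : coneSet S h) : G) ∈ coneSet S ((T ⟨g', hg'⟩ : coneSet S h) : G) := by
  have hroot : T ⟨g, self_mem_coneSet S g⟩ = ⟨h, self_mem_coneSet S h⟩ := Subtype.ext hT
  rw [mem_cone_iff_intrinsic hgen hg' hx,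
    mem_cone_iff_intrinsic hgen (T ⟨g', hg'⟩).2 (T ⟨x, hx⟩).2]
  have e1 : (⟨((T ⟨g', hg'⟩ : coneSet S h) : G), (T ⟨g', hg'⟩).2⟩ : coneSet S h) = T ⟨g', hg'⟩ :=
    rfl
  have e2 : (⟨((T ⟨x, hx⟩ : coneSet S h) : G), (T ⟨x, hx⟩).2⟩ : coneSet S h) = T ⟨x, hx⟩ := rfl
  rw [e1, e2, ← hroot]
  rw [iso_dist T, iso_dist T, iso_dist T, ← iso_reachable T]

lemma weakEquiv_of_iso (hgen : Subgroup.closure S = ⊤) {g h : G}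
    (T : (cayley S).induce (coneSet S g) ≃g (cayley S).induce (coneSet S h))
    (hT : ((T ⟨g, self_mem_coneSet S g⟩ : coneSet S h) : G) = h)
    {g' : G} (hg' : g' ∈ coneSet S g) :
    WeakEquiv S g' ((T ⟨g', hg'⟩ : coneSet S h) : G) := by
  set h' : G := ((T ⟨g', hg'⟩ : coneSet S h) : G) with hh'def
  have hh' : h' ∈ coneSet S h := (T ⟨g', hg'⟩).2
  have key : ∀ (x : G) (hx : x ∈ coneSet S g),
      x ∈ coneSet S g' ↔ ((T ⟨x, hx⟩ : coneSet S h) : G) ∈ coneSet S h' :=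
    fun x hx => cone_image_mem_iff hgen T hT hg' hx
  have keyrev : ∀ (y : G) (hy : y ∈ coneSet S h),
      y ∈ coneSet S h' ↔ ((T.symm ⟨y, hy⟩ : coneSet S g) : G) ∈ coneSet S g' := by
    intro y hy
    have := key ((T.symm ⟨y, hy⟩ : coneSet S g) : G) (T.symm ⟨y, hy⟩).2
    rw [this]
    have e : T ⟨((T.symm ⟨y, hy⟩ : coneSet S g) : G), (T.symm ⟨y, hy⟩).2⟩ = ⟨y, hy⟩ := by
      have e2 : (⟨((T.symm ⟨y, hy⟩ : coneSet S g) : G), (T.symm ⟨y, hy⟩).2⟩ : coneSet S g)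
          = T.symm ⟨y, hy⟩ := rfl
      rw [e2, RelIso.apply_symm_apply]
    rw [e]
  refine ⟨?_, ?_⟩
  · refine RelIso.mk (Equiv.mk
      (fun x => ⟨((T ⟨x.1, cone_mono hgen hg' x.2⟩ : coneSet S h) : G),
        (key x.1 (cone_mono hgen hg' x.2)).mp x.2⟩)
      (fun y => ⟨((T.symm ⟨y.1, cone_mono hgen hh' y.2⟩ : coneSet S g) : G),
        (keyrev y.1 (cone_mono hgen hh' y.2)).mp y.2⟩)
      ?_ ?_) ?_
    · intro x
      apply Subtype.ext
      show ((T.symm ⟨((T ⟨x.1, _⟩ : coneSet S h) : G), _⟩ : coneSet S g) : G) = x.1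
      have e2 : (⟨((T ⟨x.1, cone_mono hgen hg' x.2⟩ : coneSet S h) : G), _⟩ : coneSet S h)
          = T ⟨x.1, cone_mono hgen hg' x.2⟩ := rfl
      rw [e2, RelIso.symm_apply_apply]
    · intro y
      apply Subtype.ext
      show ((T ⟨((T.symm ⟨y.1, _⟩ : coneSet S g) : G), _⟩ : coneSet S h) : G) = y.1
      have e2 : (⟨((T.symm ⟨y.1, cone_mono hgen hh' y.2⟩ : coneSet S g) : G), _⟩ : coneSet S g)
          = T.symm ⟨y.1, cone_mono hgen hh' y.2⟩ := rfl
      rw [e2, RelIso.apply_symm_apply]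
    · intro a b
      exact T.map_rel_iff
  · rfl

end WE

section Count
variable {S : Set G}

/-- Canonical representative selector. -/
noncomputable def rho (S : Set G) (F : Finset G) (g : G) : Option G :=
  F.toList.find? (fun t => @decide (WeakEquiv S g t) (Classical.propDecidable _))

lemma find?_congr {α : Type*} (l : List α) (p q : α → Bool) (h : ∀ x ∈ l, p x = q x) :
    l.find? p = l.find? q := by
  induction l with
  | nil => rfl
  | cons a l ih =>
    simp only [List.find?_cons]
    rw [h a (by simp)]
    cases q a
    · exact ih fun x hx => h x (by simp [hx])
    · rfl

lemma rho_congr {F : Finset G} {g g' : G} (h : WeakEquiv S g g') :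
    rho S F g = rho S F g' := by
  unfold rho
  apply find?_congr
  intro t _
  simp only [decide_eq_decide]
  exact ⟨fun hw => weakEquiv_trans (weakEquiv_symm h) hw, fun hw => weakEquiv_trans h hw⟩

lemma rho_spec {F : Finset G} {g : G} (hfin : ∃ h ∈ F, WeakEquiv S g h) :
    ∃ t, rho S F g = some t ∧ t ∈ F ∧ WeakEquiv S g t := by
  obtain ⟨h, hF, hw⟩ := hfin
  have hsome : (F.toList.find? (fun t => @decide (WeakEquiv S g t)
      (Classical.propDecidable _))).isSome := by
    rw [List.find?_isSome]
    exact ⟨h, Finset.mem_toList.mpr hF, by simp [hw]⟩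
  obtain ⟨t, ht⟩ := Option.isSome_iff_exists.mp hsome
  refine ⟨t, ht, Finset.mem_toList.mp (List.mem_of_find?_eq_some ht), ?_⟩
  have := List.find?_some ht
  simpa using this

lemma words_finite (hS : S.Finite) (n : ℕ) :
    {w : List G | (∀ x ∈ w, x ∈ S ∪ S⁻¹) ∧ w.length = n}.Finite := by
  induction n with
  | zero =>
    apply Set.Finite.subset (Set.finite_singleton ([] : List G))
    rintro w ⟨-, hw⟩
    simp [List.length_eq_zero_iff.mp hw]
  | succ n ih =>
    apply Set.Finite.subset (Set.Finite.image2 List.cons (hS.union hS.inv) ih)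
    rintro w ⟨hw, hl⟩
    match w with
    | a :: w' =>
      exact Set.mem_image2_of_mem (hw a (by simp))
        ⟨fun x hx => hw x (by simp [hx]), by simpa using hl⟩

lemma gw_finite (hS : S.Finite) (n : ℕ) :
    {w : List G | (∀ x ∈ w, x ∈ S ∪ S⁻¹) ∧ w.length = n ∧ wordLength S w.prod = n}.Finite :=
  (words_finite hS n).subset fun w ⟨h1, h2, _⟩ => ⟨h1, h2⟩

/-- The set of norm-increasing neighbours. -/
def Nout (S : Set G) (g : G) : Set G :=
  {h | (cayley S).Adj g h ∧ wordLength S h = wordLength S g + 1}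

lemma Nout_finite (hS : S.Finite) (g : G) : (Nout S g).Finite := by
  apply Set.Finite.subset (((hS.union hS.inv).image (fun a => a * g)))
  rintro h ⟨hadj, -⟩
  exact ⟨h * g⁻¹, (show g ≠ h ∧ h * g⁻¹ ∈ S ∪ S⁻¹ from hadj).2, by group⟩

lemma ncard_fiberwise {α β : Type*} {s : Set α} (hs : s.Finite) (f : α → β) (B : Finset β)
    (hf : ∀ a ∈ s, f a ∈ B) : s.ncard = ∑ b ∈ B, {a ∈ s | f a = b}.ncard := by
  classical
  rw [Set.ncard_eq_toFinset_card s hs]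
  rw [Finset.card_eq_sum_card_fiberwise (f := f) (t := B)
    (fun a ha => hf a (hs.mem_toFinset.mp ha))]
  apply Finset.sum_congr rfl
  intro b _
  have hsub : {a ∈ s | f a = b}.Finite := hs.subset (Set.sep_subset _ _)
  rw [Set.ncard_eq_toFinset_card _ hsub]
  congr 1
  ext a
  simp [Set.Finite.mem_toFinset]

lemma ncard_bijOn {α β : Type*} {s : Set α} {t : Set β} {f : α → β} (h : Set.BijOn f s t) :
    s.ncard = t.ncard := by
  rw [← h.image_eq, Set.ncard_image_of_injOn h.injOn]

end Count

section Transfer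
variable {S : Set G}

def gwset (S : Set G) (n : ℕ) : Set (List G) :=
  {w | (∀ x ∈ w, x ∈ S ∪ S⁻¹) ∧ w.length = n ∧ wordLength S w.prod = n}

lemma geodesicGrowth_eq (n : ℕ) : geodesicGrowth S n = (gwset S n).ncard := rfl

lemma gwset_finite {S : Set G} (hS : S.Finite) (n : ℕ) : (gwset S n).Finite :=
  (words_finite hS n).subset fun w ⟨h1, h2, _⟩ => ⟨h1, h2⟩

lemma mem_Nout_cone {g h : G} (hh : h ∈ Nout S g) : h ∈ coneSet S g :=
  (adj_mem_coneSet_iff hh.1).mpr hh.2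

/-- Invariance of the out-neighbour count under weak equivalence. -/
lemma Nout_count_eq (hgen : Subgroup.closure S = ⊤) (F : Finset G) {g t : G}
    (hw : WeakEquiv S g t) (t' : G) :
    {h ∈ Nout S g | rho S F h = some t'}.ncard
      = {h ∈ Nout S t | rho S F h = some t'}.ncard := by
  classical
  obtain ⟨T, hT⟩ := hw
  have hroot : T ⟨g, self_mem_coneSet S g⟩ = ⟨t, self_mem_coneSet S t⟩ := Subtype.ext hT
  have hTsymm : ((T.symm ⟨t, self_mem_coneSet S t⟩ : coneSet S g) : G) = g := by
    rw [← hroot, RelIso.symm_apply_apply]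
  set φ : G → G := fun h => if hh : h ∈ coneSet S g then ((T ⟨h, hh⟩ : coneSet S t) : G) else 1
    with hφ
  apply ncard_bijOn (f := φ)
  constructor
  · -- MapsTo
    rintro h ⟨hN, hrho⟩
    have hh : h ∈ coneSet S g := mem_Nout_cone hN
    have hφh : φ h = ((T ⟨h, hh⟩ : coneSet S t) : G) := dif_pos hh
    have hadj : ((cayley S).induce (coneSet S g)).Adj ⟨g, self_mem_coneSet S g⟩ ⟨h, hh⟩ := hN.1
    have hadj' := T.map_rel_iff.mpr hadj
    rw [hroot] at hadj'
    have hadj'' : (cayley S).Adj t (φ h) := by rw [hφh]; exact hadj'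
    refine ⟨⟨hadj'', (adj_mem_coneSet_iff hadj'').mp ?_⟩, ?_⟩
    · rw [hφh]; exact (T ⟨h, hh⟩).2
    · rw [← hrho]
      apply rho_congr
      apply weakEquiv_symm
      rw [hφh]
      exact weakEquiv_of_iso hgen T hT hh
  constructor
  · -- InjOn
    rintro h1 ⟨hN1, -⟩ h2 ⟨hN2, -⟩ heq
    have hh1 : h1 ∈ coneSet S g := mem_Nout_cone hN1
    have hh2 : h2 ∈ coneSet S g := mem_Nout_cone hN2
    rw [hφ] at heq
    simp only [dif_pos hh1, dif_pos hh2] at heq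
    have := T.injective (Subtype.ext heq)
    exact congrArg Subtype.val this
  · -- SurjOn
    rintro k ⟨hNk, hrhok⟩
    have hk : k ∈ coneSet S t := mem_Nout_cone hNk
    set h : G := ((T.symm ⟨k, hk⟩ : coneSet S g) : G) with hhdef
    have hhmem : h ∈ coneSet S g := (T.symm ⟨k, hk⟩).2
    have hTh : T ⟨h, hhmem⟩ = ⟨k, hk⟩ := by
      have e2 : (⟨h, hhmem⟩ : coneSet S g) = T.symm ⟨k, hk⟩ := rfl
      rw [e2, RelIso.apply_symm_apply]
    have hadjk : ((cayley S).induce (coneSet S t)).Adj ⟨t, self_mem_coneSet S t⟩ ⟨k, hk⟩ := hNk.1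
    have hadj : (cayley S).Adj g h := by
      have := T.symm.map_rel_iff.mpr hadjk
      rw [show T.symm ⟨t, self_mem_coneSet S t⟩ = ⟨g, self_mem_coneSet S g⟩ from
        Subtype.ext hTsymm] at this
      exact this
    have hNh : h ∈ Nout S g := ⟨hadj, (adj_mem_coneSet_iff hadj).mp hhmem⟩
    refine ⟨h, ⟨hNh, ?_⟩, ?_⟩
    · rw [← hrhok]
      apply rho_congr
      have := weakEquiv_of_iso hgen T hT hhmem
      rw [hTh] at this
      exact (show WeakEquiv S h k from this)
    · show φ h = k
      rw [hφ]
      simp only [dif_pos hhmem]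
      rw [hTh]

end Transfer

section Recur
variable {S : Set G}

lemma tail_mem_gwset (hgen : Subgroup.closure S = ⊤) {n : ℕ} {w : List G}
    (hw : w ∈ gwset S (n + 1)) : w.tail ∈ gwset S n := by
  obtain ⟨hletters, hlen, hN⟩ := hw
  match w with
  | a :: v =>
    show v ∈ gwset S n
    have hlv : v.length = n := by simpa using hlen
    have hvletters : ∀ x ∈ v, x ∈ S ∪ S⁻¹ := fun x hx => hletters x (by simp [hx])
    have hle : wordLength S v.prod ≤ n := hlv ▸ wordLength_le v hvletters rfl
    have h1 : wordLength S ((a :: v).prod) ≤ wordLength S v.prod + 1 := by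
      rw [List.prod_cons]
      exact wordLength_mul_le hgen (hletters a (by simp)) v.prod
    have hN' : wordLength S ((a :: v).prod) = n + 1 := hN
    exact ⟨hvletters, hlv, by omega⟩

/-- The fiber of words of length `n+1` with given tail is in bijection with marked
out-neighbours. -/
lemma fiber_count (hgen : Subgroup.closure S = ⊤) (F : Finset G) {n : ℕ} {w : List G}
    (hw : w ∈ gwset S n) (t' : G) :
    {w' ∈ {u ∈ gwset S (n + 1) | rho S F u.prod = some t'} | w'.tail = w}.ncard
      = {h ∈ Nout S w.prod | rho S F h = some t'}.ncard := by
  apply ncard_bijOn (f := List.prod)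
  obtain ⟨hwl, hwlen, hwN⟩ := hw
  refine ⟨?_, ?_, ?_⟩
  · -- MapsTo
    rintro w' ⟨⟨⟨hl', hlen', hN'⟩, hrho'⟩, htail⟩
    match w' with
    | a :: v =>
      have hv : v = w := htail
      rw [hv] at hl' hlen' hN' hrho' ⊢
      have hprod : (a :: w).prod = a * w.prod := List.prod_cons
      have hNa : wordLength S (a * w.prod) = n + 1 := by rw [← hprod]; exact hN'
      refine ⟨⟨show w.prod ≠ (a :: w).prod ∧ (a :: w).prod * w.prod⁻¹ ∈ S ∪ S⁻¹ from ⟨?_, ?_⟩, ?_⟩, ?_⟩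
      · rw [hprod]
        intro heq
        rw [← heq] at hNa
        omega
      · rw [hprod]
        have : a * w.prod * w.prod⁻¹ = a := by group
        rw [this]
        exact hl' a (by simp)
      · rw [hprod, hNa, hwN]
      · exact hrho'
  · -- InjOn
    rintro w1 ⟨⟨⟨-, h1len, -⟩, -⟩, h1tail⟩ w2 ⟨⟨⟨-, h2len, -⟩, -⟩, h2tail⟩ heq
    match w1, w2 with
    | a1 :: v1, a2 :: v2 =>
      have hv1 : v1 = w := h1tail
      have hv2 : v2 = w := h2tail
      rw [hv1, hv2] at heq ⊢
      rw [List.prod_cons, List.prod_cons] at heq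
      have : a1 = a2 := mul_right_cancel heq
      rw [this]
  · -- SurjOn
    rintro h ⟨⟨hadj, hN⟩, hrho⟩
    have hprodh : ((h * w.prod⁻¹) :: w).prod = h := by rw [List.prod_cons]; group
    refine ⟨(h * w.prod⁻¹) :: w, ⟨⟨⟨?_, ?_, ?_⟩, ?_⟩, rfl⟩, hprodh⟩
    · intro x hx
      rcases List.mem_cons.mp hx with rfl | hx
      exacts [(show w.prod ≠ h ∧ h * w.prod⁻¹ ∈ S ∪ S⁻¹ from hadj).2, hwl x hx]
    · simpa using hwlen
    · rw [hprodh]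
      omega
    · rw [hprodh]
      exact hrho

lemma gw_count_succ (hS : S.Finite) (hgen : Subgroup.closure S = ⊤) (F : Finset G)
    (hfin : ∀ g : G, ∃ h ∈ F, WeakEquiv S g h) (n : ℕ) (t' : G) :
    {u ∈ gwset S (n + 1) | rho S F u.prod = some t'}.ncard
      = ∑ t ∈ F, {h ∈ Nout S t | rho S F h = some t'}.ncard
          * {w ∈ gwset S n | rho S F w.prod = some t}.ncard := by
  classical
  have hWfin : {u ∈ gwset S (n + 1) | rho S F u.prod = some t'}.Finite :=
    ((gwset_finite hS (n + 1)).subset (Set.sep_subset _ _))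
  have hgwfin := gwset_finite hS n
  have step1 := ncard_fiberwise hWfin List.tail hgwfin.toFinset
    (fun u hu => hgwfin.mem_toFinset.mpr (tail_mem_gwset hgen hu.1))
  rw [step1]
  have step2 : ∀ w ∈ hgwfin.toFinset,
      {w' ∈ {u ∈ gwset S (n + 1) | rho S F u.prod = some t'} | w'.tail = w}.ncard
        = {h ∈ Nout S w.prod | rho S F h = some t'}.ncard :=
    fun w hw => fiber_count hgen F (hgwfin.mem_toFinset.mp hw) t'
  rw [Finset.sum_congr rfl step2]
  have key : ∀ w ∈ hgwfin.toFinset,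
      (Option.getD (rho S F w.prod) 1) ∈ F := by
    intro w _
    obtain ⟨t, ht, htF, -⟩ := rho_spec (hfin w.prod)
    rw [ht]; exact htF
  rw [← Finset.sum_fiberwise_of_maps_to key]
  apply Finset.sum_congr rfl
  intro t htF
  have inner : ∀ w ∈ hgwfin.toFinset.filter (fun w => Option.getD (rho S F w.prod) 1 = t),
      {h ∈ Nout S w.prod | rho S F h = some t'}.ncard
        = {h ∈ Nout S t | rho S F h = some t'}.ncard := by
    intro w hwmem
    obtain ⟨hw, hget⟩ := Finset.mem_filter.mp hwmem
    obtain ⟨t0, ht0, -, hwe⟩ := rho_spec (hfin w.prod)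
    have : t0 = t := by rw [ht0] at hget; simpa using hget
    rw [this] at hwe
    exact Nout_count_eq hgen F hwe t'
  rw [Finset.sum_congr rfl inner, Finset.sum_const, smul_eq_mul, Nat.mul_comm]
  congr 1
  have hsub : {w ∈ gwset S n | rho S F w.prod = some t}.Finite :=
    hgwfin.subset (Set.sep_subset _ _)
  rw [Set.ncard_eq_toFinset_card _ hsub]
  congr 1
  ext w
  simp only [Finset.mem_filter, Set.Finite.mem_toFinset, Set.mem_setOf_eq]
  constructor
  · rintro ⟨hw, hget⟩
    obtain ⟨t0, ht0, -, -⟩ := rho_spec (hfin w.prod)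
    rw [ht0] at hget
    simp only [Option.getD_some] at hget
    rw [hget] at ht0
    exact ⟨hw, ht0⟩
  · rintro ⟨hw, hrho⟩
    exact ⟨hw, by rw [hrho]; rfl⟩

lemma gw_total (hS : S.Finite) (hgen : Subgroup.closure S = ⊤) (F : Finset G)
    (hfin : ∀ g : G, ∃ h ∈ F, WeakEquiv S g h) (n : ℕ) :
    geodesicGrowth S n = ∑ t ∈ F, {w ∈ gwset S n | rho S F w.prod = some t}.ncard := by
  classical
  rw [geodesicGrowth_eq]
  have hgwfin := gwset_finite hS n
  have key : ∀ w ∈ (F : Finset G), True := fun _ _ => trivial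
  have key2 : ∀ w ∈ gwset S n, (Option.getD (rho S F w.prod) 1) ∈ F := by
    intro w _
    obtain ⟨t, ht, htF, -⟩ := rho_spec (hfin w.prod)
    rw [ht]; exact htF
  rw [ncard_fiberwise hgwfin (fun w => Option.getD (rho S F w.prod) 1) F key2]
  apply Finset.sum_congr rfl
  intro t htF
  congr 1
  ext w
  simp only [Set.mem_setOf_eq]
  constructor
  · rintro ⟨hw, hget⟩
    obtain ⟨t0, ht0, -, -⟩ := rho_spec (hfin w.prod)
    rw [ht0] at hget
    simp only [Option.getD_some] at hget
    rw [hget] at ht0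
    exact ⟨hw, ht0⟩
  · rintro ⟨hw, hrho⟩
    exact ⟨hw, by rw [hrho]; rfl⟩

end Recur

section Matrixy

lemma sum_mulVec {ι n : Type*} [Fintype n] (s : Finset ι) (M : ι → Matrix n n ℤ)
    (v : n → ℤ) : (∑ i ∈ s, M i).mulVec v = ∑ i ∈ s, (M i).mulVec v := by
  ext t
  simp only [Matrix.mulVec, dotProduct, Finset.sum_apply, Matrix.sum_apply,
    Finset.sum_mul]
  rw [Finset.sum_comm]

lemma exists_linear_recurrence {S : Set G} (hS : S.Finite) (hgen : Subgroup.closure S = ⊤)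
    (F : Finset G) (hfin : ∀ g : G, ∃ h ∈ F, WeakEquiv S g h) :
    ∃ (D : ℕ) (c : ℕ → ℤ), c D = 1 ∧
      ∀ n : ℕ, ∑ i ∈ Finset.range (D + 1), c i * (geodesicGrowth S (n + i) : ℤ) = 0 := by
  classical
  set ι := {x // x ∈ F}
  set A : Matrix ι ι ℤ :=
    fun t' t => ({h ∈ Nout S (t : G) | rho S F h = some (t' : G)}.ncard : ℤ) with hA
  set fv : ℕ → ι → ℤ :=
    fun n t => ({w ∈ gwset S n | rho S F w.prod = some (t : G)}.ncard : ℤ) with hfv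
  have hstep : ∀ n, fv (n + 1) = A.mulVec (fv n) := by
    intro n
    funext t'
    have := gw_count_succ hS hgen F hfin n (t' : G)
    simp only [hfv, Matrix.mulVec, dotProduct, hA]
    rw [this]
    push_cast
    exact (Finset.sum_coe_sort _ _).symm
  have hpow : ∀ n, fv n = (A ^ n).mulVec (fv 0) := by
    intro n
    induction n with
    | zero => rw [pow_zero, Matrix.one_mulVec]
    | succ n ih =>
      rw [hstep n, ih, Matrix.mulVec_mulVec, ← pow_succ']
  have htot : ∀ n, (geodesicGrowth S n : ℤ) = ∑ t : ι, fv n t := by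
    intro n
    rw [gw_total hS hgen F hfin n]
    push_cast
    exact (Finset.sum_coe_sort _ _).symm
  set χ := A.charpoly with hχ
  refine ⟨χ.natDegree, χ.coeff, (A.charpoly_monic).coeff_natDegree, ?_⟩
  have hCH : ∑ i ∈ Finset.range (χ.natDegree + 1), χ.coeff i • A ^ i = 0 := by
    have := A.aeval_self_charpoly
    rwa [Polynomial.aeval_eq_sum_range] at this
  intro n
  have key : ∑ i ∈ Finset.range (χ.natDegree + 1), χ.coeff i • A ^ (n + i) = 0 := by
    have : ∀ i, A ^ (n + i) = A ^ i * A ^ n := fun i => by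
      rw [← pow_add, Nat.add_comm]
    calc ∑ i ∈ Finset.range (χ.natDegree + 1), χ.coeff i • A ^ (n + i)
        = (∑ i ∈ Finset.range (χ.natDegree + 1), χ.coeff i • A ^ i) * A ^ n := by
          rw [Finset.sum_mul]
          exact Finset.sum_congr rfl fun i _ => by rw [this i, smul_mul_assoc]
      _ = 0 := by rw [hCH, zero_mul]
  calc ∑ i ∈ Finset.range (χ.natDegree + 1), χ.coeff i * (geodesicGrowth S (n + i) : ℤ)
      = ∑ i ∈ Finset.range (χ.natDegree + 1), ∑ t : ι, χ.coeff i * fv (n + i) t := by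
        refine Finset.sum_congr rfl fun i _ => by rw [htot, Finset.mul_sum]
    _ = ∑ t : ι, ∑ i ∈ Finset.range (χ.natDegree + 1), χ.coeff i * fv (n + i) t :=
        Finset.sum_comm
    _ = ∑ t : ι, ((∑ i ∈ Finset.range (χ.natDegree + 1), χ.coeff i • A ^ (n + i)).mulVec
          (fv 0)) t := by
        refine Finset.sum_congr rfl fun t _ => ?_
        rw [sum_mulVec]
        rw [Finset.sum_apply]
        refine Finset.sum_congr rfl fun i _ => ?_
        rw [Matrix.smul_mulVec, Pi.smul_apply, smul_eq_mul, ← hpow]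
    _ = 0 := by rw [key]; simp [Matrix.zero_mulVec]

end Matrixy

/-- If the Cayley graph has finitely many cone types (up to weak equivalence), then the
geodesic growth series `L(z) = Σ l(n) zⁿ` is rational. -/
theorem geodesic_growth_series_rational (S : Set G) (hS : S.Finite)
    (hgen : Subgroup.closure S = ⊤)
    (hfin : ∃ F : Finset G, ∀ g : G, ∃ h ∈ F, WeakEquiv S g h) :
    ∃ P Q : Polynomial ℤ, Q ≠ 0 ∧
      (Q : PowerSeries ℤ) * PowerSeries.mk (fun n => (geodesicGrowth S n : ℤ))
        = (P : PowerSeries ℤ) := by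
  classical
  obtain ⟨F, hfinF⟩ := hfin
  obtain ⟨D, c, hcD, hrec⟩ := exists_linear_recurrence hS hgen F hfinF
  set L : PowerSeries ℤ := PowerSeries.mk (fun n => (geodesicGrowth S n : ℤ)) with hL
  set Q : Polynomial ℤ := ∑ i ∈ Finset.range (D + 1), Polynomial.C (c i) * Polynomial.X ^ (D - i)
    with hQ
  have hQcoe : (Q : PowerSeries ℤ)
      = ∑ i ∈ Finset.range (D + 1), PowerSeries.C (c i) * PowerSeries.X ^ (D - i) := by
    rw [hQ, ← Polynomial.coeToPowerSeries.ringHom_apply, map_sum]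
    refine Finset.sum_congr rfl fun i _ => ?_
    rw [map_mul, map_pow, Polynomial.coeToPowerSeries.ringHom_apply,
      Polynomial.coeToPowerSeries.ringHom_apply, Polynomial.coe_C, Polynomial.coe_X]
  have hvanish : ∀ m, D ≤ m → PowerSeries.coeff m ((Q : PowerSeries ℤ) * L) = 0 := by
    intro m hm
    rw [hQcoe, Finset.sum_mul, map_sum]
    have hterm : ∀ i ∈ Finset.range (D + 1),
        PowerSeries.coeff m (PowerSeries.C (c i) * PowerSeries.X ^ (D - i) * L)
          = c i * (geodesicGrowth S (m - D + i) : ℤ) := by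
      intro i hi
      have hiD : i ≤ D := Nat.lt_succ_iff.mp (Finset.mem_range.mp hi)
      rw [mul_assoc, PowerSeries.coeff_C_mul, PowerSeries.coeff_X_pow_mul',
        if_pos (le_trans (Nat.sub_le D i) hm)]
      have harg : m - (D - i) = m - D + i := by omega
      rw [harg, hL, PowerSeries.coeff_mk]
    rw [Finset.sum_congr rfl hterm, hrec (m - D)]
  set P : Polynomial ℤ := ((Q : PowerSeries ℤ) * L).trunc D with hP
  refine ⟨P, Q, ?_, ?_⟩
  · have h0 : Q.coeff 0 = 1 := by
      rw [hQ, Polynomial.finset_sum_coeff]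
      rw [Finset.sum_eq_single D]
      · simp [Nat.sub_self, hcD]
      · intro i hi hne
        have hiD : i < D :=
          lt_of_le_of_ne (Nat.lt_succ_iff.mp (Finset.mem_range.mp hi)) hne
        rw [Polynomial.coeff_C_mul, Polynomial.coeff_X_pow, if_neg (by omega), mul_zero]
      · intro hD
        exact absurd (Finset.self_mem_range_succ D) hD
    intro hQ0
    rw [hQ0] at h0
    simp at h0
  · refine PowerSeries.ext fun m => ?_
    rw [Polynomial.coeff_coe, hP, PowerSeries.coeff_trunc]
    by_cases hm : m < D
    · rw [if_pos hm]
    · rw [if_neg hm, hvanish m (le_of_not_gt hm)]
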